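/- Let G = (V,E) be a finite simple graph with no isolated vertices and let u, v be adjacent vertices such that no edge in δ(u) ∪ δ(v) is pendant (equivalently, no vertex of G has {u} or {v} as its entire neighborhood, and u, v are not pendant) and |N(u,v)| ≤ 1, where N(u,v) = {w ∈ V : N(w) = {u,v}}. Then α(G[V⟨δ(u) ∪ δ(v)⟩]) = 1; that is, the induced subgraph on the set of vertices all of whose incident edges lie in δ(u) ∪ δ(v) is either a single edge or a triangle, so its maximum independent set has size one. -/

import Mathlib

open Finset

variable {V : Type*} [Fintype V] [DecidableEq V]

/-- `I` is an independent set of the graph `G`. -/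
def Indep (G : SimpleGraph V) (I : Finset V) : Prop :=
  ∀ u ∈ I, ∀ v ∈ I, ¬ G.Adj u v

/-- The independence number of `G` restricted to the vertex set `U`,
i.e. `α(G[U])`: the maximum size of an independent set contained in `U`. -/
noncomputable def alphaOn (G : SimpleGraph V) (U : Set V) : ℕ :=
  sSup {n : ℕ | ∃ I : Finset V, ↑I ⊆ U ∧ Indep G I ∧ I.card = n}

/-- `δ(v)`: the set of edges of `G` incident to the vertex `v`. -/
def incEdges (G : SimpleGraph V) (v : V) : Set (Sym2 V) :=
  {e | e ∈ G.edgeSet ∧ v ∈ e}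

/-- `δ(v)` as a finset. -/
def incFinset (G : SimpleGraph V) [DecidableRel G.Adj] (v : V) : Finset (Sym2 V) :=
  G.edgeFinset.filter (fun e => v ∈ e)

/-- `V⟨S⟩`: the set of vertices of `G` all of whose incident edges lie in `S`. -/
def onlyInc (G : SimpleGraph V) (S : Set (Sym2 V)) : Set V :=
  {v | incEdges G v ⊆ S}

/-- The characteristic function of the independent set game on `G`:
`γ(S) = α(G[V⟨S⟩])`. -/
noncomputable def gammaIS (G : SimpleGraph V) (S : Finset (Sym2 V)) : ℕ :=
  alphaOn G (onlyInc G ↑S)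

/-- `x` is a population monotonic allocation scheme (PMAS) of the independent set
game on `G`: it is nonnegative, efficient, and monotone.  Coalitions are the
nonempty subsets of the player set `N = E(G)` (`G.edgeFinset`). -/
def IsPMAS (G : SimpleGraph V) [DecidableRel G.Adj]
    (x : Finset (Sym2 V) → Sym2 V → ℝ) : Prop :=
  (∀ S ⊆ G.edgeFinset, ∀ i ∈ S, 0 ≤ x S i) ∧
  (∀ S ⊆ G.edgeFinset, S.Nonempty → ∑ i ∈ S, x S i = (gammaIS G S : ℝ)) ∧
  (∀ S T : Finset (Sym2 V), S ⊆ T → T ⊆ G.edgeFinset → S.Nonempty →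
    ∀ i ∈ S, x S i ≤ x T i)

/-- An edge of `G` is pendant if one of its endpoints has degree one. -/
def PendantEdge (G : SimpleGraph V) [DecidableRel G.Adj] (e : Sym2 V) : Prop :=
  e ∈ G.edgeSet ∧ ∃ v ∈ e, G.degree v = 1

/-- A non-pendant edge of type I: not incident to any pendant edge. -/
def TypeI (G : SimpleGraph V) [DecidableRel G.Adj] (e : Sym2 V) : Prop :=
  e ∈ G.edgeSet ∧ ¬ PendantEdge G e ∧
    ∀ f : Sym2 V, PendantEdge G f → ¬ ∃ w : V, w ∈ e ∧ w ∈ f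

/-- A non-pendant edge of type II: incident to some pendant edge. -/
def TypeII (G : SimpleGraph V) [DecidableRel G.Adj] (e : Sym2 V) : Prop :=
  e ∈ G.edgeSet ∧ ¬ PendantEdge G e ∧
    ∃ f : Sym2 V, PendantEdge G f ∧ ∃ w : V, w ∈ e ∧ w ∈ f

/-- The vertex `v` has distance at most two to some pendant vertex of `G`. -/
def NearPendant (G : SimpleGraph V) [DecidableRel G.Adj] (v : V) : Prop :=
  ∃ p : V, G.degree p = 1 ∧ ∃ w : G.Walk v p, w.length ≤ 2

/-- Let `u, v` be adjacent vertices of a graph `G` with no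
isolated vertices such that no edge in `δ(u) ∪ δ(v)` is pendant and
`|N(u,v)| ≤ 1`, where `N(u,v) = {w : N(w) = {u,v}}`.  Then
`α(G[V⟨δ(u) ∪ δ(v)⟩]) = 1`. -/
theorem stmt_13 (G : SimpleGraph V) [DecidableRel G.Adj]
    (hiso : ∀ w : V, G.degree w ≠ 0)
    (u v : V) (huv : G.Adj u v)
    (hnp : ∀ e ∈ incEdges G u ∪ incEdges G v, ¬ PendantEdge G e)
    (hN : {w : V | G.neighborSet w = {u, v}}.Subsingleton) :
    alphaOn G (onlyInc G (incEdges G u ∪ incEdges G v)) = 1 := by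
  set U := onlyInc G (incEdges G u ∪ incEdges G v) with hUdef
  have huU : u ∈ U := fun e he => Or.inl he
  have hchar : ∀ x ∈ U, x = u ∨ x = v ∨ G.neighborSet x = {u, v} := by
    intro x hx
    by_cases hxu : x = u; · exact Or.inl hxu
    by_cases hxv : x = v; · exact Or.inr (Or.inl hxv)
    refine Or.inr (Or.inr ?_)
    have hnb : ∀ y, G.Adj x y → y = u ∨ y = v := by
      intro y hxy
      have he : s(x, y) ∈ incEdges G x :=
        ⟨G.mem_edgeSet.mpr hxy, Sym2.mem_mk_left x y⟩
      rcases hx he with h | h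
      · rcases Sym2.mem_iff.mp h.2 with h' | h'
        · exact absurd h'.symm hxu
        · exact Or.inl h'.symm
      · rcases Sym2.mem_iff.mp h.2 with h' | h'
        · exact absurd h'.symm hxv
        · exact Or.inr h'.symm
    obtain ⟨y0, hy0⟩ : ∃ y, G.Adj x y := by
      have := hiso x
      rw [← SimpleGraph.degree_pos_iff_exists_adj]
      omega
    have hdeg1 : ∀ z : V, G.neighborFinset x = {z} → G.Adj x z → False := by
      intro z hz hadj
      have hd : G.degree x = 1 := by
        rw [SimpleGraph.degree, hz, Finset.card_singleton]
      have hpe : PendantEdge G s(x, z) :=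
        ⟨G.mem_edgeSet.mpr hadj, x, Sym2.mem_mk_left x z, hd⟩
      have hmem : s(x, z) ∈ incEdges G u ∪ incEdges G v := by
        rcases hnb z hadj with rfl | rfl
        · exact Or.inl ⟨G.mem_edgeSet.mpr hadj, Sym2.mem_mk_right x z⟩
        · exact Or.inr ⟨G.mem_edgeSet.mpr hadj, Sym2.mem_mk_right x z⟩
      exact hnp _ hmem hpe
    have hu : G.Adj x u := by
      by_contra hcon
      have hall : ∀ y, G.Adj x y → y = v := by
        intro y hy
        rcases hnb y hy with rfl | rfl
        · exact absurd hy hcon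
        · rfl
      have hxv' : G.Adj x v := by rwa [hall y0 hy0] at hy0
      apply hdeg1 v ?_ hxv'
      apply Finset.eq_singleton_iff_unique_mem.mpr
      exact ⟨(SimpleGraph.mem_neighborFinset _ _ _).mpr hxv',
        fun z hz => hall z ((SimpleGraph.mem_neighborFinset _ _ _).mp hz)⟩
    have hv : G.Adj x v := by
      by_contra hcon
      have hall : ∀ y, G.Adj x y → y = u := by
        intro y hy
        rcases hnb y hy with rfl | rfl
        · rfl
        · exact absurd hy hcon
      apply hdeg1 u ?_ hu
      apply Finset.eq_singleton_iff_unique_mem.mpr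
      exact ⟨(SimpleGraph.mem_neighborFinset _ _ _).mpr hu,
        fun z hz => hall z ((SimpleGraph.mem_neighborFinset _ _ _).mp hz)⟩
    ext y
    simp only [SimpleGraph.mem_neighborSet, Set.mem_insert_iff, Set.mem_singleton_iff]
    constructor
    · exact hnb y
    · rintro (rfl | rfl)
      · exact hu
      · exact hv
  have memadj : ∀ a b : V, G.neighborSet a = ({u, v} : Set V) → (b = u ∨ b = v) → G.Adj a b := by
    intro a b hNa hb
    have : b ∈ G.neighborSet a := by
      rw [hNa]
      rcases hb with rfl | rfl
      · exact Set.mem_insert _ _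
      · exact Set.mem_insert_iff.mpr (Or.inr rfl)
    exact this
  have hadj : ∀ a ∈ U, ∀ b ∈ U, a ≠ b → G.Adj a b := by
    intro a ha b hb hab
    rcases hchar a ha with hau | hav | hNa <;> rcases hchar b hb with hbu | hbv | hNb
    · exact absurd (hau.trans hbu.symm) hab
    · rw [hau, hbv]; exact huv
    · rw [hau]; exact (memadj b u hNb (Or.inl rfl)).symm
    · rw [hav, hbu]; exact huv.symm
    · exact absurd (hav.trans hbv.symm) hab
    · rw [hav]; exact (memadj b v hNb (Or.inr rfl)).symm
    · rw [hbu]; exact memadj a u hNa (Or.inl rfl)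
    · rw [hbv]; exact memadj a v hNa (Or.inr rfl)
    · exact absurd (hN hNa hNb) hab
  have h1 : (1 : ℕ) ∈ {n : ℕ | ∃ I : Finset V, ↑I ⊆ U ∧ Indep G I ∧ I.card = n} := by
    refine ⟨{u}, ?_, ?_, Finset.card_singleton u⟩
    · intro x hx
      simp only [Finset.coe_singleton, Set.mem_singleton_iff] at hx
      exact hx ▸ huU
    · intro a ha b hb
      simp only [Finset.mem_singleton] at ha hb
      rw [ha, hb]
      exact G.irrefl
  have hub : ∀ n ∈ {n : ℕ | ∃ I : Finset V, ↑I ⊆ U ∧ Indep G I ∧ I.card = n}, n ≤ 1 := by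
    rintro n ⟨I, hIU, hInd, rfl⟩
    apply Finset.card_le_one.mpr
    intro a ha b hb
    by_contra hne
    exact hInd a ha b hb (hadj a (hIU ha) b (hIU hb) hne)
  exact le_antisymm (csSup_le ⟨1, h1⟩ hub) (le_csSup ⟨1, hub⟩ h1)
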